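/- With the notation of the selection-matrix construction: let Σ be K×K positive definite, M a random binary vector with P(M = 1_K) > 0, and V_M(Σ) as defined. Then e_K^T E[V_M(Σ)]^{-1} e_K ≤ P(M_K = 1)^{-1} · e_K^T Σ e_K. -/

import Mathlib

open Matrix BigOperators Finset

/-- The `K × n_m` selection matrix `D_m` whose columns are the standard basis vectors
`e_t` for the indices `t` with `m t = true` (columns indexed by the subtype of such `t`). -/
noncomputable def selMat (K : ℕ) (m : Fin K → Bool) :
    Matrix (Fin K) {t : Fin K // m t = true} ℝ :=
  Matrix.of fun i j => if i = (j : Fin K) then 1 else 0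

/-- `V_m(Σ) = D_m (D_mᵀ Σ D_m)⁻¹ D_mᵀ`.  When `m = 0` the column index type is empty,
so this is the zero matrix, matching the convention `V_0(Σ) = 0`. -/
noncomputable def Vm (K : ℕ) (S : Matrix (Fin K) (Fin K) ℝ) (m : Fin K → Bool) :
    Matrix (Fin K) (Fin K) ℝ :=
  selMat K m * ((selMat K m)ᵀ * S * selMat K m)⁻¹ * (selMat K m)ᵀ

/-- `E[V_M(Σ)] = ∑ m P(M = m) V_m(Σ)`. -/
noncomputable def EVm (K : ℕ) (S : Matrix (Fin K) (Fin K) ℝ)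
    (p : (Fin K → Bool) → ℝ) : Matrix (Fin K) (Fin K) ℝ :=
  ∑ m : Fin K → Bool, p m • Vm K S m

/-- Lemma 1(2), inequality: for positive definite `Σ` and a random binary
vector `M` with `P(M = 1_K) > 0`,
`e_Kᵀ E[V_M(Σ)]⁻¹ e_K ≤ P(M_K = 1)⁻¹ · e_Kᵀ Σ e_K`. -/

lemma vecMul_selMat (K : ℕ) (m : Fin K → Bool) (x : Fin K → ℝ) :
    x ᵥ* selMat K m = fun j => x j.1 := by
  ext j
  simp [selMat, vecMul, dotProduct]

lemma selMat_transpose_eq_conjTranspose (K : ℕ) (m : Fin K → Bool) :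
    (selMat K m)ᵀ = (selMat K m)ᴴ := by
  ext i j
  simp [selMat, conjTranspose_apply]

lemma selMat_mulVec_apply (K : ℕ) (m : Fin K → Bool)
    (x : {t : Fin K // m t = true} → ℝ) (j : {t : Fin K // m t = true}) :
    (selMat K m *ᵥ x) j.1 = x j := by
  simp only [selMat, mulVec, dotProduct, Matrix.of_apply]
  rw [Finset.sum_eq_single j]
  · simp
  · intro b _ hb
    have : ¬ (j : Fin K) = (b : Fin K) := fun h => hb (Subtype.ext h.symm)
    simp [this]
  · simp

lemma selMat_mulVec_ne_zero (K : ℕ) (m : Fin K → Bool)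
    (x : {t : Fin K // m t = true} → ℝ) (hx : x ≠ 0) : selMat K m *ᵥ x ≠ 0 := by
  obtain ⟨j, hj⟩ := Function.ne_iff.mp hx
  intro h
  apply hj
  have := congrFun h j.1
  rwa [selMat_mulVec_apply] at this

lemma Bm_posDef (K : ℕ) (S : Matrix (Fin K) (Fin K) ℝ) (hS : S.PosDef) (m : Fin K → Bool) :
    ((selMat K m)ᵀ * S * selMat K m).PosDef := by
  refine Matrix.posDef_iff_dotProduct_mulVec.mpr ⟨?_, ?_⟩
  · rw [selMat_transpose_eq_conjTranspose]
    exact isHermitian_conjTranspose_mul_mul _ hS.1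
  · intro x hx
    have h2 := hS.dotProduct_mulVec_pos (selMat_mulVec_ne_zero K m x hx)
    rw [selMat_transpose_eq_conjTranspose]
    have : star x ⬝ᵥ ((selMat K m)ᴴ * S * selMat K m) *ᵥ x
        = star (selMat K m *ᵥ x) ⬝ᵥ S *ᵥ (selMat K m *ᵥ x) := by
      simp only [star_mulVec, Matrix.dotProduct_mulVec, vecMul_vecMul, Matrix.mul_assoc]
    rw [this]
    exact h2

lemma Vm_posSemidef (K : ℕ) (S : Matrix (Fin K) (Fin K) ℝ) (hS : S.PosDef) (m : Fin K → Bool) :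
    (Vm K S m).PosSemidef := by
  have hB := (Bm_posDef K S hS m).inv.posSemidef
  have := hB.mul_mul_conjTranspose_same (selMat K m)
  rwa [Vm, selMat_transpose_eq_conjTranspose]

lemma Vm_quad (K : ℕ) (S : Matrix (Fin K) (Fin K) ℝ) (m : Fin K → Bool) (x : Fin K → ℝ) :
    x ⬝ᵥ Vm K S m *ᵥ x
      = (fun j => x j.1) ⬝ᵥ ((selMat K m)ᵀ * S * selMat K m)⁻¹ *ᵥ (fun j => x j.1) := by
  rw [Vm, ← mulVec_mulVec, ← mulVec_mulVec, Matrix.dotProduct_mulVec,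
    vecMul_selMat, mulVec_transpose, vecMul_selMat]

lemma posdef_diag_pos {n : Type*} [Fintype n] [DecidableEq n]
    {B : Matrix n n ℝ} (hB : B.PosDef) (k : n) : 0 < B k k := by
  have h := hB.dotProduct_mulVec_pos (x := Pi.single k 1) (by simp [Function.ne_iff])
  simpa [dotProduct, Matrix.mulVec, Pi.single_apply] using h

lemma cauchy_pd {n : Type*} [Fintype n] [DecidableEq n]
    {B : Matrix n n ℝ} (hB : B.PosDef) (k : n) (y : n → ℝ) :
    (y k) ^ 2 ≤ B k k * (y ⬝ᵥ B⁻¹ *ᵥ y) := by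
  have hBkk : 0 < B k k := posdef_diag_pos hB k
  set z : n → ℝ := B⁻¹ *ᵥ y with hzdef
  have hBz : B *ᵥ z = y := by
    rw [hzdef, mulVec_mulVec, Matrix.mul_nonsing_inv _ (isUnit_iff_ne_zero.mpr hB.det_pos.ne'),
      one_mulVec]
  have hBt : Bᵀ = B := by
    have := hB.1.eq
    rwa [conjTranspose_eq_transpose_of_trivial] at this
  set e : n → ℝ := Pi.single k 1 with hedef
  set t : ℝ := y k / B k k with htdef
  have h1 : e ⬝ᵥ y = y k := by simp [hedef, single_dotProduct]
  have h2 : z ⬝ᵥ B *ᵥ e = y k := by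
    rw [Matrix.dotProduct_mulVec, ← Matrix.mulVec_transpose, hBt, hBz, hedef]
    simp [dotProduct_single]
  have h3 : e ⬝ᵥ B *ᵥ e = B k k := by
    rw [hedef]
    simp [single_dotProduct, Matrix.mulVec_single]
  have h4 : e ⬝ᵥ B *ᵥ z = y k := by rw [hBz, h1]
  have hq : 0 ≤ (z - t • e) ⬝ᵥ B *ᵥ (z - t • e) := by
    have := hB.posSemidef.dotProduct_mulVec_nonneg (z - t • e)
    simpa using this
  have hexp : (z - t • e) ⬝ᵥ B *ᵥ (z - t • e)
      = z ⬝ᵥ y - 2 * t * y k + t ^ 2 * B k k := by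
    simp only [Matrix.mulVec_sub, Matrix.mulVec_smul, dotProduct_sub,
      sub_dotProduct, dotProduct_smul, smul_dotProduct, smul_eq_mul,
      hBz, h1, h2, h3, h4]
    ring
  rw [hexp] at hq
  have hyz : y ⬝ᵥ B⁻¹ *ᵥ y = z ⬝ᵥ y := by rw [← hzdef, dotProduct_comm]
  rw [hyz]
  have ht : t * B k k = y k := div_mul_cancel₀ _ hBkk.ne'
  nlinarith [hq, ht, hBkk, sq_nonneg (t * B k k - y k)]

lemma Bm_apply (K : ℕ) (m : Fin K → Bool) (S : Matrix (Fin K) (Fin K) ℝ)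
    (i j : {t : Fin K // m t = true}) :
    ((selMat K m)ᵀ * S * selMat K m) i j = S i.1 j.1 := by
  simp [selMat, Matrix.mul_apply, Finset.sum_ite_eq, ite_mul, mul_ite]

lemma EVm_quad (K : ℕ) (S : Matrix (Fin K) (Fin K) ℝ) (p : (Fin K → Bool) → ℝ)
    (x : Fin K → ℝ) :
    x ⬝ᵥ EVm K S p *ᵥ x = ∑ m : Fin K → Bool, p m * (x ⬝ᵥ Vm K S m *ᵥ x) := by
  rw [EVm]
  simp only [dotProduct, Matrix.mulVec, Matrix.sum_apply, Matrix.smul_apply,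
    smul_eq_mul, Finset.sum_mul, Finset.mul_sum]
  conv_lhs => enter [2, i]; rw [Finset.sum_comm]
  rw [Finset.sum_comm]
  refine Finset.sum_congr rfl fun m _ => ?_
  refine Finset.sum_congr rfl fun i _ => ?_
  refine Finset.sum_congr rfl fun j _ => ?_
  ring

lemma EVm_posDef (K : ℕ) (S : Matrix (Fin (K+1)) (Fin (K+1)) ℝ) (hS : S.PosDef)
    (p : (Fin (K+1) → Bool) → ℝ) (hp0 : ∀ m, 0 ≤ p m)
    (hfull : 0 < p (fun _ => true)) : (EVm (K+1) S p).PosDef := by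
  refine Matrix.posDef_iff_dotProduct_mulVec.mpr ⟨?_, ?_⟩
  · show (EVm (K+1) S p)ᴴ = _
    rw [EVm, Matrix.conjTranspose_sum]
    refine Finset.sum_congr rfl fun m _ => ?_
    rw [Matrix.conjTranspose_smul, (Vm_posSemidef (K+1) S hS m).1]
    simp
  · intro x hx
    have hst : star x = x := by simp
    rw [hst, EVm_quad]
    have hterm : ∀ m : Fin (K+1) → Bool, 0 ≤ p m * (x ⬝ᵥ Vm (K+1) S m *ᵥ x) := by
      intro m
      have := (Vm_posSemidef (K+1) S hS m).dotProduct_mulVec_nonneg x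
      rw [hst] at this
      exact mul_nonneg (hp0 m) this
    have hpos : 0 < p (fun _ => true) * (x ⬝ᵥ Vm (K+1) S (fun _ => true) *ᵥ x) := by
      apply mul_pos hfull
      rw [Vm_quad]
      have hBinv := (Bm_posDef (K+1) S hS (fun _ => true)).inv
      apply lt_of_lt_of_le (hBinv.dotProduct_mulVec_pos (x := fun j => x j.1) ?_) (le_of_eq ?_)
      · obtain ⟨i, hi⟩ := Function.ne_iff.mp hx
        exact Function.ne_iff.mpr ⟨⟨i, rfl⟩, hi⟩
      · simp
    calc (0:ℝ) < p (fun _ => true) * (x ⬝ᵥ Vm (K+1) S (fun _ => true) *ᵥ x) := hpos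
      _ ≤ _ := Finset.single_le_sum (fun m _ => hterm m) (Finset.mem_univ _)

theorem stmt2 (K : ℕ)
    (S : Matrix (Fin (K+1)) (Fin (K+1)) ℝ) (hS : S.PosDef)
    (p : (Fin (K+1) → Bool) → ℝ) (hp0 : ∀ m, 0 ≤ p m) (hp1 : ∑ m, p m = 1)
    (hfull : 0 < p (fun _ => true)) :
    (EVm (K+1) S p)⁻¹ (Fin.last K) (Fin.last K)
      ≤ (∑ m ∈ Finset.univ.filter (fun m => m (Fin.last K) = true), p m)⁻¹
        * S (Fin.last K) (Fin.last K) := by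
  have hApd : (EVm (K+1) S p).PosDef := EVm_posDef K S hS p hp0 hfull
  set ℓ := Fin.last K with hℓ
  set A := EVm (K+1) S p with hA
  have hdet : IsUnit A.det := isUnit_iff_ne_zero.mpr hApd.det_pos.ne'
  set e : Fin (K+1) → ℝ := Pi.single ℓ 1 with hedef
  set u : Fin (K+1) → ℝ := A⁻¹ *ᵥ e with hudef
  have hAu : A *ᵥ u = e := by
    rw [hudef, mulVec_mulVec, Matrix.mul_nonsing_inv _ hdet, one_mulVec]
  have hukk : u ℓ = A⁻¹ ℓ ℓ := by
    rw [hudef, hedef]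
    simp [Matrix.mulVec_single]
  set a := u ℓ with hadef
  set s := S ℓ ℓ with hsdef
  have hs : 0 < s := posdef_diag_pos hS ℓ
  set q := ∑ m ∈ Finset.univ.filter (fun m : Fin (K+1) → Bool => m ℓ = true), p m with hqdef
  have hq : 0 < q := by
    rw [hqdef]
    apply Finset.sum_pos' (fun m _ => hp0 m)
    exact ⟨fun _ => true, Finset.mem_filter.mpr ⟨Finset.mem_univ _, rfl⟩, hfull⟩
  have hqdnn : ∀ m : Fin (K+1) → Bool, 0 ≤ u ⬝ᵥ Vm (K+1) S m *ᵥ u := by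
    intro m
    have := (Vm_posSemidef (K+1) S hS m).dotProduct_mulVec_nonneg u
    simpa using this
  have hquad : ∀ m ∈ Finset.univ.filter (fun m : Fin (K+1) → Bool => m ℓ = true),
      a ^ 2 / s ≤ u ⬝ᵥ Vm (K+1) S m *ᵥ u := by
    intro m hm
    have hmℓ : m ℓ = true := (Finset.mem_filter.mp hm).2
    have hc := cauchy_pd (Bm_posDef (K+1) S hS m) ⟨ℓ, hmℓ⟩ (fun j => u j.1)
    rw [Bm_apply] at hc
    have hc2 : a ^ 2 ≤ s * ((fun j : {t : Fin (K+1) // m t = true} => u j.1) ⬝ᵥ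
        ((selMat (K+1) m)ᵀ * S * selMat (K+1) m)⁻¹ *ᵥ (fun j => u j.1)) := hc
    rw [Vm_quad, div_le_iff₀ hs]
    linarith [hc2]
  have h0 : u ⬝ᵥ A *ᵥ u = a := by
    rw [hAu, hedef]
    simp [dotProduct_single, hadef]
  have key : q * (a ^ 2 / s) ≤ a := by
    have h1 : ∑ m ∈ Finset.univ.filter (fun m : Fin (K+1) → Bool => m ℓ = true),
        p m * (u ⬝ᵥ Vm (K+1) S m *ᵥ u)
        ≤ ∑ m : Fin (K+1) → Bool, p m * (u ⬝ᵥ Vm (K+1) S m *ᵥ u) :=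
      Finset.sum_le_sum_of_subset_of_nonneg (Finset.filter_subset _ _)
        (fun m _ _ => mul_nonneg (hp0 m) (hqdnn m))
    have h2 : q * (a ^ 2 / s)
        = ∑ m ∈ Finset.univ.filter (fun m : Fin (K+1) → Bool => m ℓ = true),
          p m * (a ^ 2 / s) := by
      rw [hqdef, Finset.sum_mul]
    have h3 : ∑ m ∈ Finset.univ.filter (fun m : Fin (K+1) → Bool => m ℓ = true),
          p m * (a ^ 2 / s)
        ≤ ∑ m ∈ Finset.univ.filter (fun m : Fin (K+1) → Bool => m ℓ = true),
          p m * (u ⬝ᵥ Vm (K+1) S m *ᵥ u) :=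
      Finset.sum_le_sum fun m hm => mul_le_mul_of_nonneg_left (hquad m hm) (hp0 m)
    have h4 := EVm_quad (K+1) S p u
    rw [← hA, h0] at h4
    linarith
  rw [← hukk, (div_eq_inv_mul s q).symm, le_div_iff₀ hq]
  rcases le_or_gt a 0 with h | h
  · nlinarith [hq, hs, h]
  · have hks : q * (a ^ 2 / s) * s ≤ a * s := mul_le_mul_of_nonneg_right key hs.le
    have hcan : a ^ 2 / s * s = a ^ 2 := div_mul_cancel₀ _ hs.ne'
    nlinarith [hks, hcan, h, mul_pos h hq]
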